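/- arXiv:0912.1502 — 3 statements merged into one kernel-verified Lean document; each statement's English description precedes it below -/
import Mathlib

section
/- Let K be a field, K[X] = K[x_1,…,x_n], I ⊆ K[X] a zero-dimensional ideal, and d = dim_K K[X]/I. Then the quotient vector space ⟨T^n_{≤d−1}⟩_K / I^{≤d−1} is isomorphic as a K-vector space to K[X]/I; in particular dim_K ⟨T^n_{≤d−1}⟩_K − dim_K I^{≤d−1} = d. -/
open MvPolynomial

/-- Total degree of a monomial given by its exponent vector. -/
def mdeg {n : ℕ} (m : Fin n →₀ ℕ) : ℕ := m.sum fun _ k => k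

/-- The set `T^n_{≤i}` of monomials of total degree at most `i` (indexed by
`i : ℤ`, so that `T^n_{≤-1} = ∅`). -/
def degLEZ (n : ℕ) (i : ℤ) : Set (Fin n →₀ ℕ) := {m | (mdeg m : ℤ) ≤ i}

/-- The `K`-vector subspace of `K[X]` spanned by a set of monomials. -/
noncomputable def monSpan (K : Type*) [Field K] {n : ℕ} (O : Set (Fin n →₀ ℕ)) :
    Submodule K (MvPolynomial (Fin n) K) :=
  Submodule.span K ((fun m => (monomial m (1 : K))) '' O)

/-- The degree filtration `I^{≤i} = {p ∈ I : deg p ≤ i}` of an ideal `I`,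
as a `K`-subspace of `K[X]`. -/
noncomputable def Ile {n : ℕ} {K : Type*} [Field K]
    (I : Ideal (MvPolynomial (Fin n) K)) (i : ℤ) : Submodule K (MvPolynomial (Fin n) K) :=
  Submodule.restrictScalars K I ⊓ monSpan K (degLEZ n i)

lemma mdeg_eq_degree {n : ℕ} (m : Fin n →₀ ℕ) : mdeg m = Finsupp.degree m := rfl

lemma mdeg_add {n : ℕ} (a b : Fin n →₀ ℕ) : mdeg (a + b) = mdeg a + mdeg b :=
  Finsupp.sum_add_index' (fun _ => rfl) (fun _ _ _ => rfl)

lemma degLEZ_finite (n : ℕ) (i : ℤ) : (degLEZ n i).Finite := by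
  rcases le_or_gt 0 i with h | h
  · obtain ⟨N, rfl⟩ := Int.eq_ofNat_of_zero_le h
    have hfin := Finsupp.finite_of_nat_weight_le (σ := Fin n) 1 (fun _ => one_ne_zero) N
    apply hfin.subset
    intro m hm
    simp only [degLEZ, Set.mem_setOf_eq] at hm
    have : mdeg m ≤ N := by exact_mod_cast hm
    have e : (Finsupp.weight (1 : Fin n → ℕ)) m = mdeg m :=
      by rw [mdeg_eq_degree, Finsupp.degree_eq_weight_one (R := ℕ)]; rfl
    simpa [Set.mem_setOf_eq, e] using this
  · convert Set.finite_empty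
    ext m
    simp only [degLEZ, Set.mem_setOf_eq, Set.mem_empty_iff_false, iff_false, not_le]
    exact lt_of_lt_of_le h (by positivity)

lemma monSpan_fd (K : Type*) [Field K] {n : ℕ} (i : ℤ) :
    FiniteDimensional K (monSpan K (degLEZ n i)) :=
  FiniteDimensional.span_of_finite K ((degLEZ_finite n i).image _)

lemma monSpan_mono (K : Type*) [Field K] {n : ℕ} {i j : ℤ} (h : i ≤ j) :
    monSpan K (degLEZ n i) ≤ monSpan K (degLEZ n j) :=
  Submodule.span_mono (Set.image_mono fun m hm => le_trans hm h)

lemma mem_monSpan_of_mdeg_le {K : Type*} [Field K] {n : ℕ} {m : Fin n →₀ ℕ} {i : ℤ}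
    (h : (mdeg m : ℤ) ≤ i) : (monomial m (1 : K)) ∈ monSpan K (degLEZ n i) :=
  Submodule.subset_span ⟨m, h, rfl⟩

lemma self_mem_monSpan {K : Type*} [Field K] {n : ℕ} {i : ℤ} (p : MvPolynomial (Fin n) K)
    (hp : (p.totalDegree : ℤ) ≤ i) : p ∈ monSpan K (degLEZ n i) := by
  rw [p.as_sum]
  refine Submodule.sum_mem _ fun v hv => ?_
  have : monomial v (coeff v p) = (coeff v p) • monomial v (1 : K) := by
    rw [smul_monomial, smul_eq_mul, mul_one]
  rw [this]
  refine Submodule.smul_mem _ _ (mem_monSpan_of_mdeg_le (le_trans ?_ hp))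
  exact_mod_cast le_totalDegree hv

lemma mul_X_mem_monSpan {K : Type*} [Field K] {n : ℕ} {i : ℤ} (j : Fin n)
    {p : MvPolynomial (Fin n) K} (hp : p ∈ monSpan K (degLEZ n i)) :
    X j * p ∈ monSpan K (degLEZ n (i + 1)) := by
  induction hp using Submodule.span_induction with
  | mem x hx =>
      obtain ⟨m, hm, rfl⟩ := hx
      simp only [degLEZ, Set.mem_setOf_eq] at hm
      have : X j * monomial m (1 : K) = monomial (Finsupp.single j 1 + m) 1 := by
        rw [X, monomial_mul, one_mul]
      rw [this]
      apply mem_monSpan_of_mdeg_le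
      have : mdeg (Finsupp.single j 1 + m) = 1 + mdeg m := by
        rw [mdeg_add]; congr 1; simp [mdeg, Finsupp.sum_single_index]
      rw [this]
      push_cast
      omega
  | zero => simpa using Submodule.zero_mem _
  | add x y _ _ hx hy => rw [mul_add]; exact Submodule.add_mem _ hx hy
  | smul c x _ hx => rw [mul_smul_comm]; exact Submodule.smul_mem _ _ hx

section Main

variable {n : ℕ} {K : Type*} [Field K] (I : Ideal (MvPolynomial (Fin n) K))

noncomputable def piI : MvPolynomial (Fin n) K →ₗ[K] (MvPolynomial (Fin n) K ⧸ I) :=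
  (Ideal.Quotient.mkₐ K I).toLinearMap

noncomputable def VI (i : ℕ) : Submodule K (MvPolynomial (Fin n) K ⧸ I) :=
  Submodule.map (piI I) (monSpan K (degLEZ n i))

lemma VI_mono {i j : ℕ} (h : i ≤ j) : VI I i ≤ VI I j :=
  Submodule.map_mono (monSpan_mono K (by exact_mod_cast h))

lemma VI_exhaust (q : MvPolynomial (Fin n) K ⧸ I) : ∃ i, q ∈ VI I i := by
  obtain ⟨p, rfl⟩ := Ideal.Quotient.mk_surjective q
  exact ⟨p.totalDegree, ⟨p, self_mem_monSpan p le_rfl, rfl⟩⟩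

lemma VI_step {i : ℕ} (h : VI I i = VI I (i + 1)) : VI I (i + 1) = VI I (i + 2) := by
  refine le_antisymm (VI_mono I (by omega)) ?_
  rw [VI, monSpan, Submodule.map_span, Submodule.span_le]
  rintro q ⟨-, ⟨m, hm, rfl⟩, rfl⟩
  simp only [degLEZ, Set.mem_setOf_eq] at hm
  rcases le_or_gt (mdeg m : ℤ) ((i : ℤ) + 1) with hle | hlt
  · exact ⟨monomial m 1, mem_monSpan_of_mdeg_le (by push_cast; exact_mod_cast hle), rfl⟩
  · -- mdeg m = i + 2 > 0, so m ≠ 0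
    have hm0 : m ≠ 0 := by
      rintro rfl
      simp [mdeg] at hlt
      omega
    obtain ⟨j, hj⟩ := Finsupp.support_nonempty_iff.mpr hm0
    have hj' : 1 ≤ m j := Nat.one_le_iff_ne_zero.mpr (Finsupp.mem_support_iff.mp hj)
    set m' := m - Finsupp.single j 1 with hm'
    have hsum : Finsupp.single j 1 + m' = m := by
      ext x
      simp only [Finsupp.add_apply, Finsupp.tsub_apply, hm', Finsupp.single_apply]
      rcases eq_or_ne j x with rfl | hne
      · simp; omega
      · simp [hne]
    have hdeg' : (mdeg m' : ℤ) ≤ (i : ℤ) + 1 := by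
      have : mdeg m = 1 + mdeg m' := by
        rw [← hsum, mdeg_add]; congr 1; simp [mdeg, Finsupp.sum_single_index]
      omega
    have hmem' : piI I (monomial m' (1 : K)) ∈ VI I i := by
      rw [h]; exact ⟨monomial m' 1, mem_monSpan_of_mdeg_le hdeg', rfl⟩
    obtain ⟨q', hq', hqeq⟩ := hmem'
    rw [SetLike.mem_coe, VI, Submodule.mem_map]
    have hcast : ((i + 1 : ℕ) : ℤ) = (i : ℤ) + 1 := by push_cast; ring
    refine ⟨X j * q', by rw [hcast]; exact mul_X_mem_monSpan j hq', ?_⟩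
    have heq : monomial m (1 : K) = X j * monomial m' 1 := by
      rw [X, monomial_mul, one_mul, hsum]
    show (piI I) (X j * q') = (piI I) ((monomial m) 1)
    rw [heq]
    simp only [piI, AlgHom.toLinearMap_apply] at hqeq ⊢
    rw [map_mul, map_mul, hqeq]

lemma VI_stable {i : ℕ} (h : VI I i = VI I (i + 1)) : ∀ j, i ≤ j → VI I j = VI I i := by
  have key : ∀ j, i ≤ j → VI I j = VI I (j + 1) := by
    intro j hj
    induction j, hj using Nat.le_induction with
    | base => exact h
    | succ j hj ih => exact VI_step I ih
  intro j hj
  induction j, hj using Nat.le_induction with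
  | base => rfl
  | succ j hj ih => rw [← ih]; exact (key j hj).symm

lemma VI_eq_top_of_stable {i : ℕ} (h : VI I i = VI I (i + 1)) : VI I i = ⊤ := by
  rw [eq_top_iff]
  intro q _
  obtain ⟨k, hk⟩ := VI_exhaust I q
  rcases le_or_gt k i with hle | hlt
  · exact VI_mono I hle hk
  · rw [← VI_stable I h k hlt.le]; exact hk

lemma piI_apply (a : MvPolynomial (Fin n) K) : piI I a = Ideal.Quotient.mk I a := rfl

set_option maxHeartbeats 1000000 in
set_option synthInstance.maxHeartbeats 400000 in
lemma VI_top (hI : FiniteDimensional K (MvPolynomial (Fin n) K ⧸ I)) (k : ℕ)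
    (hk : k + 1 = Module.finrank K (MvPolynomial (Fin n) K ⧸ I)) : VI I k = ⊤ := by
  have hnt : Nontrivial (MvPolynomial (Fin n) K ⧸ I) := by
    rw [← Module.finrank_pos_iff (R := K)]
    omega
  have growth : ∀ i : ℕ, VI I i = ⊤ ∨ i + 1 ≤ Module.finrank K (VI I i) := by
    intro i
    induction i with
    | zero =>
        rcases eq_or_ne (VI I 0) ⊤ with h | h
        · exact Or.inl h
        · right
          have h1 : (1 : MvPolynomial (Fin n) K ⧸ I) ∈ VI I 0 := by
            refine ⟨1, ?_, by rw [piI_apply, map_one]⟩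
            have h1' : (1 : MvPolynomial (Fin n) K) = monomial 0 1 := by
              rw [monomial_zero']; rfl
            rw [h1']
            exact mem_monSpan_of_mdeg_le (by simp [mdeg])
          rw [Nat.succ_le_iff, Module.finrank_pos_iff (R := K)]
          exact ⟨⟨⟨1, h1⟩, 0, fun hc => one_ne_zero (congrArg Subtype.val hc)⟩⟩
    | succ i ih =>
        rcases ih with h | h
        · exact Or.inl (top_unique (h ▸ VI_mono I (Nat.le_succ i)))
        · rcases eq_or_ne (VI I i) (VI I (i + 1)) with he | hne
          · have htop := VI_eq_top_of_stable I he
            exact Or.inl (top_unique (htop ▸ VI_mono I (Nat.le_succ i)))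
          · right
            have hlt : VI I i < VI I (i + 1) :=
              lt_of_le_of_ne (VI_mono I (Nat.le_succ i)) hne
            have := Submodule.finrank_lt_finrank_of_lt hlt
            omega
  rcases growth k with h | h
  · exact h
  · apply Submodule.eq_top_of_finrank_eq
    have hle := Submodule.finrank_le (VI I k)
    omega

end Main

set_option maxHeartbeats 1000000 in
set_option synthInstance.maxHeartbeats 400000 in
/-- for a zero-dimensional ideal `I` with `d = dim_K K[X]/I`,
the quotient `⟨T^n_{≤d-1}⟩_K / I^{≤d-1}` is `K`-linearly isomorphic to
`K[X]/I`; in particular `dim ⟨T^n_{≤d-1}⟩_K - dim I^{≤d-1} = d`. -/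
theorem monSpan_quotient_Ile_iso {n : ℕ} {K : Type*} [Field K]
    (I : Ideal (MvPolynomial (Fin n) K))
    (hI : FiniteDimensional K (MvPolynomial (Fin n) K ⧸ I))
    (d : ℕ) (hd : d = Module.finrank K (MvPolynomial (Fin n) K ⧸ I)) :
    Nonempty ((↥(monSpan K (degLEZ n ((d : ℤ) - 1))) ⧸
        Submodule.comap (monSpan K (degLEZ n ((d : ℤ) - 1))).subtype
          (Ile I ((d : ℤ) - 1))) ≃ₗ[K]
      (MvPolynomial (Fin n) K ⧸ I)) ∧
    Module.finrank K ↥(monSpan K (degLEZ n ((d : ℤ) - 1))) -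
      Module.finrank K ↥(Ile I ((d : ℤ) - 1)) = d := by
  haveI := monSpan_fd K (n := n) ((d : ℤ) - 1)
  set i : ℤ := (d : ℤ) - 1 with hi
  let f : ↥(monSpan K (degLEZ n i)) →ₗ[K] (MvPolynomial (Fin n) K ⧸ I) :=
    (piI I).comp (monSpan K (degLEZ n i)).subtype
  have hker : LinearMap.ker f =
      Submodule.comap (monSpan K (degLEZ n i)).subtype (Ile I i) := by
    ext x
    simp only [LinearMap.mem_ker, Submodule.mem_comap, Ile, Submodule.mem_inf,
      Submodule.coe_subtype, Submodule.restrictScalars_mem, LinearMap.comp_apply, f,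
      piI_apply]
    constructor
    · intro hx; exact ⟨Ideal.Quotient.eq_zero_iff_mem.mp hx, x.2⟩
    · intro hx; exact Ideal.Quotient.eq_zero_iff_mem.mpr hx.1
  have hsurj : Function.Surjective f := by
    rw [← LinearMap.range_eq_top, LinearMap.range_comp, Submodule.range_subtype]
    rcases d with _ | k
    · haveI : Subsingleton (MvPolynomial (Fin n) K ⧸ I) := by
        rw [← Module.finrank_zero_iff (R := K)]
        omega
      exact Subsingleton.elim _ _
    · have hcast : i = ((k : ℕ) : ℤ) := by rw [hi]; push_cast; ring
      rw [hcast]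
      exact VI_top I hI k hd
  have hIle : Ile I i ≤ monSpan K (degLEZ n i) := inf_le_right
  refine ⟨⟨(Submodule.quotEquivOfEq _ _ hker.symm).trans
    (f.quotKerEquivOfSurjective hsurj)⟩, ?_⟩
  have e1 := Submodule.finrank_quotient_add_finrank (LinearMap.ker f)
  have e2 : Module.finrank K (↥(monSpan K (degLEZ n i)) ⧸ LinearMap.ker f) =
      Module.finrank K (MvPolynomial (Fin n) K ⧸ I) :=
    (f.quotKerEquivOfSurjective hsurj).finrank_eq
  have e3 : Module.finrank K (LinearMap.ker f) = Module.finrank K (Ile I i) := by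
    rw [hker]
    exact (Submodule.comapSubtypeEquivOfLe hIle).finrank_eq
  omega
end

section
/- Let K be a field, K[X] = K[x_1,…,x_n], I ⊆ K[X] a zero-dimensional ideal, and d = dim_K K[X]/I. For a 0/1 vector z = (z_m)_{m ∈ T^n_{≤d−1}} let O(z) = {m ∈ T^n_{≤d−1} : z_m = 1}. Then z satisfies (i) z_{m_1} ≥ z_{m_2} for all m_1, m_2 ∈ T^n_{≤d−1} with m_1 ∣ m_2, (ii) Σ_{m ∈ T^n_{≤d−1}} z_m = d, and (iii) Σ_{m ∈ U} z_m ≤ dim_K (⟨U⟩_K + I)/I for every subset U ⊆ T^n_{≤d−1} with |U| = d, if and only if O(z) is an order ideal supporting a border basis of I. Consequently, z ↦ O(z) is a bijection between the integral points of the order ideal polytope of I and the order ideals supporting a border basis of I. -/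
set_option synthInstance.maxHeartbeats 1000000
set_option maxHeartbeats 1000000
open MvPolynomial

/-- An order ideal: a finite set of monomials (represented by their exponent
vectors) closed under divisibility (`t' ∣ t` corresponds to `t' ≤ t`). -/
def IsOrderIdeal {n : ℕ} (O : Set (Fin n →₀ ℕ)) : Prop :=
  O.Finite ∧ ∀ t ∈ O, ∀ t' : Fin n →₀ ℕ, t' ≤ t → t' ∈ O

section AuxCombinatorics
variable {n : ℕ}

lemma mdeg_eq (m : Fin n →₀ ℕ) : mdeg m = ∑ i, m i :=
  Finsupp.sum_fintype _ _ (fun _ => rfl)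

lemma mdeg_mono {m₁ m₂ : Fin n →₀ ℕ} (h : m₁ ≤ m₂) : mdeg m₁ ≤ mdeg m₂ := by
  rw [mdeg_eq, mdeg_eq]
  exact Finset.sum_le_sum fun i _ => Finsupp.le_def.1 h i

lemma exists_le_mdeg (k : ℕ) (m : Fin n →₀ ℕ) (hk : k ≤ mdeg m) :
    ∃ t : Fin n →₀ ℕ, t ≤ m ∧ mdeg t = k := by
  induction k with
  | zero => exact ⟨0, zero_le, by simp [mdeg_eq]⟩
  | succ k ih =>
    obtain ⟨t, htm, htd⟩ := ih (by omega)
    have hne : ∃ i, t i < m i := by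
      by_contra hc
      push_neg at hc
      have : mdeg m ≤ mdeg t := by
        rw [mdeg_eq, mdeg_eq]; exact Finset.sum_le_sum fun i _ => hc i
      omega
    obtain ⟨i, hi⟩ := hne
    refine ⟨t + Finsupp.single i 1, ?_, ?_⟩
    · rw [Finsupp.le_def]
      intro j
      rcases eq_or_ne j i with rfl | hji
      · simpa using hi
      · simpa [Finsupp.single_apply, hji.symm] using Finsupp.le_def.1 htm j
    · rw [mdeg_eq] at htd ⊢
      simp [Finsupp.add_apply, Finset.sum_add_distrib, htd, Finsupp.single_apply]

lemma mdeg_lt_card {O : Set (Fin n →₀ ℕ)} (hO : IsOrderIdeal O) {m : Fin n →₀ ℕ}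
    (hm : m ∈ O) : mdeg m < hO.1.toFinset.card := by
  have h : ∀ k : Fin (mdeg m + 1), ∃ t : Fin n →₀ ℕ, t ≤ m ∧ mdeg t = k :=
    fun k => exists_le_mdeg k m (by omega)
  choose f hf1 hf2 using h
  have : (Finset.univ : Finset (Fin (mdeg m + 1))).card ≤ hO.1.toFinset.card := by
    apply Finset.card_le_card_of_injOn f
    · intro k _
      refine (Set.Finite.mem_toFinset _).2 ?_
      exact hO.2 m hm _ (hf1 k)
    · intro k₁ _ k₂ _ he
      have := hf2 k₁; rw [he, hf2 k₂] at this
      exact Fin.ext this.symm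
  simpa using this
end AuxCombinatorics

section AuxAlgebra
open Submodule Module
variable {n : ℕ} {K : Type*} [Field K]

lemma monSpan_mono_s11 {s t : Set (Fin n →₀ ℕ)} (h : s ⊆ t) : monSpan K s ≤ monSpan K t :=
  Submodule.span_mono (Set.image_mono h)

instance monSpan_fd_s11 (S : Finset (Fin n →₀ ℕ)) :
    FiniteDimensional K (monSpan K (S : Set (Fin n →₀ ℕ))) :=
  FiniteDimensional.span_of_finite K ((S.finite_toSet).image _)

lemma li_mon (O : Set (Fin n →₀ ℕ)) :
    LinearIndependent K (fun m : O => monomial (m : Fin n →₀ ℕ) (1 : K)) := by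
  have h := (basisMonomials (Fin n) K).linearIndependent
  rw [coe_basisMonomials] at h
  exact h.comp _ Subtype.val_injective

lemma finrank_monSpan (S : Finset (Fin n →₀ ℕ)) :
    finrank K (monSpan K (S : Set (Fin n →₀ ℕ))) = S.card := by
  have li := li_mon (K := K) (S : Set (Fin n →₀ ℕ))
  have h := finrank_span_eq_card li
  rw [monSpan, Set.image_eq_range]
  simpa [Fintype.card_coe] using h

variable (I : Ideal (MvPolynomial (Fin n) K))

lemma kerMkAlg : LinearMap.ker (Ideal.Quotient.mkₐ K I).toLinearMap = I.restrictScalars K := by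
  ext x
  simp [LinearMap.mem_ker, Ideal.Quotient.eq_zero_iff_mem]

lemma mapMkAlgKer : Submodule.map (Ideal.Quotient.mkₐ K I).toLinearMap (I.restrictScalars K) = ⊥ := by
  rw [eq_bot_iff]
  rintro x ⟨y, hy, rfl⟩
  simpa [Ideal.Quotient.eq_zero_iff_mem] using hy

lemma map_top_iff (q : Submodule K (MvPolynomial (Fin n) K)) :
    Submodule.map (Ideal.Quotient.mkₐ K I).toLinearMap q = ⊤ ↔
      I.restrictScalars K ⊔ q = ⊤ := by
  set f := (Ideal.Quotient.mkₐ K I).toLinearMap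
  constructor
  · intro h
    have h2 := congrArg (Submodule.comap f) h
    rw [Submodule.comap_map_eq, Submodule.comap_top, kerMkAlg] at h2
    rwa [sup_comm]
  · intro h
    have h2 : Submodule.map f (I.restrictScalars K ⊔ q) = ⊤ := by
      rw [h, Submodule.map_top, LinearMap.range_eq_top]
      exact Ideal.Quotient.mkₐ_surjective K I
    rwa [Submodule.map_sup, mapMkAlgKer, bot_sup_eq] at h2

lemma compl_iff (q : Submodule K (MvPolynomial (Fin n) K)) :
    IsCompl (I.restrictScalars K) q ↔
      Disjoint (I.restrictScalars K) q ∧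
        Submodule.map (Ideal.Quotient.mkₐ K I).toLinearMap q = ⊤ := by
  rw [isCompl_iff, map_top_iff, codisjoint_iff]

lemma finrank_map_of_disjoint (q : Submodule K (MvPolynomial (Fin n) K))
    [FiniteDimensional K q] (h : Disjoint (I.restrictScalars K) q) :
    finrank K (Submodule.map (Ideal.Quotient.mkₐ K I).toLinearMap q) = finrank K q := by
  set f := (Ideal.Quotient.mkₐ K I).toLinearMap
  set g := f.domRestrict q with hg
  have hker : LinearMap.ker g = ⊥ := by
    rw [eq_bot_iff]
    rintro ⟨x, hx⟩ hxk
    have hfx : f x = 0 := hxk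
    have hxI : x ∈ I.restrictScalars K := by
      rw [← kerMkAlg I]; exact hfx
    have : x = 0 := (Submodule.disjoint_def.1 h) x hxI hx
    simpa [Submodule.mk_eq_zero] using this
  have hrn := LinearMap.finrank_range_add_finrank_ker g
  rw [hker, finrank_bot, LinearMap.range_domRestrict] at hrn
  simpa using hrn

lemma disjoint_of_finrank (q : Submodule K (MvPolynomial (Fin n) K))
    [FiniteDimensional K q]
    (h : finrank K (Submodule.map (Ideal.Quotient.mkₐ K I).toLinearMap q) = finrank K q) :
    Disjoint (I.restrictScalars K) q := by
  set f := (Ideal.Quotient.mkₐ K I).toLinearMap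
  set g := f.domRestrict q with hg
  have hrn := LinearMap.finrank_range_add_finrank_ker g
  rw [LinearMap.range_domRestrict] at hrn
  have hker0 : finrank K (LinearMap.ker g) = 0 := by omega
  have hker : LinearMap.ker g = ⊥ := Submodule.finrank_eq_zero.1 hker0
  rw [Submodule.disjoint_def]
  intro x hxI hxq
  have : (⟨x, hxq⟩ : q) ∈ LinearMap.ker g := by
    have : f x = 0 := by
      rw [← kerMkAlg I] at hxI; exact hxI
    simpa [hg, LinearMap.mem_ker] using this
  rw [hker] at this
  simpa [Submodule.mk_eq_zero] using this
end AuxAlgebra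

section AuxMain
open Submodule Module
variable {n : ℕ} {K : Type*} [Field K]

lemma support_eq {z : (Fin n →₀ ℕ) →₀ ℕ} (h01 : ∀ m, z m ≤ 1) :
    {m : Fin n →₀ ℕ | z m = 1} = ↑z.support := by
  ext m
  simp only [Set.mem_setOf_eq, Finset.mem_coe, Finsupp.mem_support_iff]
  have := h01 m; omega

lemma sum_eq_card {z : (Fin n →₀ ℕ) →₀ ℕ} (h01 : ∀ m, z m ≤ 1) :
    (z.sum fun _ v => v) = z.support.card := by
  rw [Finsupp.sum, Finset.card_eq_sum_ones]
  exact Finset.sum_congr rfl fun m hm => by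
    have := h01 m; have := Finsupp.mem_support_iff.1 hm; omega

lemma of_compl (I : Ideal (MvPolynomial (Fin n) K))
    (hI : FiniteDimensional K (MvPolynomial (Fin n) K ⧸ I))
    (d : ℕ) (hd : d = finrank K (MvPolynomial (Fin n) K ⧸ I))
    (S : Finset (Fin n →₀ ℕ))
    (hC : IsCompl (I.restrictScalars K) (monSpan K (S : Set (Fin n →₀ ℕ)))) :
    S.card = d ∧ Disjoint (I.restrictScalars K) (monSpan K (S : Set (Fin n →₀ ℕ))) := by
  obtain ⟨hdis, hmap⟩ := (compl_iff I _).1 hC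
  have h1 := finrank_map_of_disjoint I (monSpan K (S : Set (Fin n →₀ ℕ))) hdis
  rw [hmap, finrank_top, finrank_monSpan] at h1
  exact ⟨by omega, hdis⟩

lemma bwd (I : Ideal (MvPolynomial (Fin n) K))
    (hI : FiniteDimensional K (MvPolynomial (Fin n) K ⧸ I))
    (d : ℕ) (hd : d = finrank K (MvPolynomial (Fin n) K ⧸ I))
    (z : (Fin n →₀ ℕ) →₀ ℕ) (h01 : ∀ m, z m ≤ 1)
    (hOI : IsOrderIdeal {m : Fin n →₀ ℕ | z m = 1})
    (hC : IsCompl (Submodule.restrictScalars K I) (monSpan K {m : Fin n →₀ ℕ | z m = 1})) :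
    (∀ m₁ m₂ : Fin n →₀ ℕ, mdeg m₁ ≤ d - 1 → mdeg m₂ ≤ d - 1 → m₁ ≤ m₂ →
        z m₂ ≤ z m₁) ∧
    (z.sum fun _ v => v) = d ∧
    (∀ U : Finset (Fin n →₀ ℕ), (∀ m ∈ U, mdeg m ≤ d - 1) → U.card = d →
      (∑ m ∈ U, z m) ≤ Module.finrank K
        ↥(Submodule.map (Ideal.Quotient.mkₐ K I).toLinearMap
          (monSpan K (U : Set (Fin n →₀ ℕ))))) := by
  classical
  rw [support_eq h01] at hC
  obtain ⟨hcard, hdis⟩ := of_compl I hI d hd z.support hC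
  refine ⟨?_, ?_, ?_⟩
  · intro m₁ m₂ _ _ h12
    by_cases h2 : z m₂ = 1
    · have h1 : z m₁ = 1 := hOI.2 m₂ h2 m₁ h12
      omega
    · have := h01 m₂; omega
  · rw [sum_eq_card h01, hcard]
  · intro U _ _
    set f := (Ideal.Quotient.mkₐ K I).toLinearMap
    set V := U ∩ z.support with hV
    have hsum : ∑ m ∈ U, z m = V.card := by
      rw [← Finset.sum_inter_add_sum_sdiff U z.support (z ·)]
      have h0 : ∑ m ∈ U \ z.support, z m = 0 := by
        apply Finset.sum_eq_zero
        intro m hm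
        have := (Finset.mem_sdiff.1 hm).2
        simpa [Finsupp.mem_support_iff] using this
      rw [h0, add_zero, Finset.card_eq_sum_ones]
      refine Finset.sum_congr rfl fun m hm => ?_
      have h1 := h01 m
      have h2 := Finsupp.mem_support_iff.1 (Finset.mem_inter.1 hm).2
      omega
    have hVS : (V : Set (Fin n →₀ ℕ)) ⊆ ↑z.support := by
      intro x hx; exact Finset.mem_coe.2 (Finset.mem_inter.1 (Finset.mem_coe.1 hx)).2
    have hdisV := hdis.mono_right (monSpan_mono_s11 hVS)
    have h1 : finrank K (Submodule.map f (monSpan K (V : Set (Fin n →₀ ℕ)))) = V.card := by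
      rw [finrank_map_of_disjoint I _ hdisV, finrank_monSpan]
    have hVU : (V : Set (Fin n →₀ ℕ)) ⊆ ↑U := by
      intro x hx; exact Finset.mem_coe.2 (Finset.mem_inter.1 (Finset.mem_coe.1 hx)).1
    have h2 : Submodule.map f (monSpan K (V : Set (Fin n →₀ ℕ))) ≤
        Submodule.map f (monSpan K (U : Set (Fin n →₀ ℕ))) :=
      Submodule.map_mono (monSpan_mono_s11 hVU)
    rw [hsum, ← h1]
    exact Submodule.finrank_mono h2

lemma fwd (I : Ideal (MvPolynomial (Fin n) K))
    (hI : FiniteDimensional K (MvPolynomial (Fin n) K ⧸ I))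
    (d : ℕ) (hd : d = finrank K (MvPolynomial (Fin n) K ⧸ I))
    (z : (Fin n →₀ ℕ) →₀ ℕ) (h01 : ∀ m, z m ≤ 1)
    (hdeg : ∀ m, z m ≠ 0 → mdeg m ≤ d - 1)
    (hi : ∀ m₁ m₂ : Fin n →₀ ℕ, mdeg m₁ ≤ d - 1 → mdeg m₂ ≤ d - 1 → m₁ ≤ m₂ →
        z m₂ ≤ z m₁)
    (hii : (z.sum fun _ v => v) = d)
    (hiii : ∀ U : Finset (Fin n →₀ ℕ), (∀ m ∈ U, mdeg m ≤ d - 1) → U.card = d →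
      (∑ m ∈ U, z m) ≤ Module.finrank K
        ↥(Submodule.map (Ideal.Quotient.mkₐ K I).toLinearMap
          (monSpan K (U : Set (Fin n →₀ ℕ))))) :
    IsOrderIdeal {m : Fin n →₀ ℕ | z m = 1} ∧
      IsCompl (Submodule.restrictScalars K I) (monSpan K {m : Fin n →₀ ℕ | z m = 1}) := by
  classical
  set f := (Ideal.Quotient.mkₐ K I).toLinearMap
  have hset := support_eq h01
  have hcard : z.support.card = d := by rw [← sum_eq_card h01, hii]
  constructor
  · constructor
    · rw [hset]; exact z.support.finite_toSet
    · intro t ht t' h'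
      have ht1 : z t = 1 := ht
      have hdt : mdeg t ≤ d - 1 := hdeg t (by omega)
      have hdt' : mdeg t' ≤ d - 1 := le_trans (mdeg_mono h') hdt
      have h2 := hi t' t hdt' hdt h'
      have h3 := h01 t'
      show z t' = 1
      omega
  · have hUdeg : ∀ m ∈ z.support, mdeg m ≤ d - 1 :=
      fun m hm => hdeg m (Finsupp.mem_support_iff.1 hm)
    have h3 := hiii z.support hUdeg hcard
    have hsum : ∑ m ∈ z.support, z m = d := by
      rw [← hii]; rfl
    rw [hsum] at h3
    have hle : finrank K (Submodule.map f (monSpan K (z.support : Set (Fin n →₀ ℕ)))) ≤ d := by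
      calc finrank K (Submodule.map f (monSpan K (z.support : Set (Fin n →₀ ℕ))))
          ≤ finrank K (monSpan K (z.support : Set (Fin n →₀ ℕ))) := finrank_map_le _ _
        _ = d := by rw [finrank_monSpan, hcard]
    have heq : finrank K (Submodule.map f (monSpan K (z.support : Set (Fin n →₀ ℕ)))) = d :=
      le_antisymm hle h3
    have hdis := disjoint_of_finrank I (monSpan K (z.support : Set (Fin n →₀ ℕ)))
      (by rw [heq, finrank_monSpan, hcard])
    have htop : Submodule.map f (monSpan K (z.support : Set (Fin n →₀ ℕ))) = ⊤ :=
      Submodule.eq_top_of_finrank_eq (by rw [heq, hd])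
    rw [hset]
    exact (compl_iff I _).2 ⟨hdis, htop⟩
end AuxMain

/-- for a zero-dimensional ideal `I` with `d = dim_K K[X]/I`,
a finitely supported `0/1` vector `z` indexed by `T^n_{≤d-1}` satisfies the
three conditions defining the order ideal polytope iff
`O(z) = {m : z m = 1}` is an order ideal supporting a border basis of `I`;
consequently `z ↦ O(z)` is a bijection between the integral points of the
order ideal polytope and the order ideals supporting a border basis of `I`. -/
theorem orderIdealPolytope_integral_points {n : ℕ} {K : Type*} [Field K]
    (I : Ideal (MvPolynomial (Fin n) K))
    (hI : FiniteDimensional K (MvPolynomial (Fin n) K ⧸ I))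
    (d : ℕ) (hd : d = Module.finrank K (MvPolynomial (Fin n) K ⧸ I)) :
    (∀ z : (Fin n →₀ ℕ) →₀ ℕ, (∀ m, z m ≤ 1) → (∀ m, z m ≠ 0 → mdeg m ≤ d - 1) →
      (((∀ m₁ m₂ : Fin n →₀ ℕ, mdeg m₁ ≤ d - 1 → mdeg m₂ ≤ d - 1 → m₁ ≤ m₂ →
            z m₂ ≤ z m₁) ∧
        (z.sum fun _ v => v) = d ∧
        (∀ U : Finset (Fin n →₀ ℕ), (∀ m ∈ U, mdeg m ≤ d - 1) → U.card = d →
          (∑ m ∈ U, z m) ≤ Module.finrank K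
            ↥(Submodule.map (Ideal.Quotient.mkₐ K I).toLinearMap
              (monSpan K (U : Set (Fin n →₀ ℕ)))))) ↔
       (IsOrderIdeal {m : Fin n →₀ ℕ | z m = 1} ∧
        IsCompl (Submodule.restrictScalars K I) (monSpan K {m : Fin n →₀ ℕ | z m = 1})))) ∧
    Set.BijOn (fun z : (Fin n →₀ ℕ) →₀ ℕ => {m : Fin n →₀ ℕ | z m = 1})
      {z : (Fin n →₀ ℕ) →₀ ℕ |
        (∀ m, z m ≤ 1) ∧ (∀ m, z m ≠ 0 → mdeg m ≤ d - 1) ∧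
        (∀ m₁ m₂ : Fin n →₀ ℕ, mdeg m₁ ≤ d - 1 → mdeg m₂ ≤ d - 1 → m₁ ≤ m₂ →
          z m₂ ≤ z m₁) ∧
        (z.sum fun _ v => v) = d ∧
        (∀ U : Finset (Fin n →₀ ℕ), (∀ m ∈ U, mdeg m ≤ d - 1) → U.card = d →
          (∑ m ∈ U, z m) ≤ Module.finrank K
            ↥(Submodule.map (Ideal.Quotient.mkₐ K I).toLinearMap
              (monSpan K (U : Set (Fin n →₀ ℕ)))))}
      {O : Set (Fin n →₀ ℕ) | IsOrderIdeal O ∧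
        IsCompl (Submodule.restrictScalars K I) (monSpan K O)} := by
  
  classical
  constructor
  · intro z h01 hdeg
    constructor
    · rintro ⟨hi, hii, hiii⟩
      exact fwd I hI d hd z h01 hdeg hi hii hiii
    · rintro ⟨hOI, hC⟩
      exact bwd I hI d hd z h01 hOI hC
  · refine ⟨?_, ?_, ?_⟩
    · rintro z ⟨h01, hdeg, hi, hii, hiii⟩
      exact fwd I hI d hd z h01 hdeg hi hii hiii
    · rintro z₁ ⟨h01₁, -⟩ z₂ ⟨h01₂, -⟩ he
      ext m
      have h1 := h01₁ m
      have h2 := h01₂ m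
      have hiff : z₁ m = 1 ↔ z₂ m = 1 := by
        constructor
        · intro h; exact (Set.ext_iff.1 he m).1 h
        · intro h; exact (Set.ext_iff.1 he m).2 h
      omega
    · rintro O ⟨hOI, hC⟩
      set S := hOI.1.toFinset with hS
      have hOS : (S : Set (Fin n →₀ ℕ)) = O := hOI.1.coe_toFinset
      set z : (Fin n →₀ ℕ) →₀ ℕ := Finsupp.indicator S (fun _ _ => 1) with hz
      have hzval : ∀ m, z m = if m ∈ S then 1 else 0 := by
        intro m
        rw [hz, Finsupp.indicator_apply]
        split <;> simp_all
      have h01 : ∀ m, z m ≤ 1 := by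
        intro m; rw [hzval]; split <;> omega
      have hsetO : {m : Fin n →₀ ℕ | z m = 1} = O := by
        ext m
        rw [Set.mem_setOf_eq, hzval, ← hOS]
        by_cases hm : m ∈ S <;> simp [hm]
      have hOI' : IsOrderIdeal {m : Fin n →₀ ℕ | z m = 1} := hsetO ▸ hOI
      have hC' : IsCompl (Submodule.restrictScalars K I)
          (monSpan K {m : Fin n →₀ ℕ | z m = 1}) := hsetO ▸ hC
      have hcard : S.card = d := (of_compl I hI d hd S (by rw [hOS]; exact hC)).1
      have hdeg : ∀ m, z m ≠ 0 → mdeg m ≤ d - 1 := by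
        intro m hm
        have hmS : m ∈ S := by
          by_contra h
          rw [hzval, if_neg h] at hm
          exact hm rfl
        have hmO : m ∈ O := by rw [← hOS]; exact hmS
        have hlt := mdeg_lt_card hOI hmO
        rw [← hS] at hlt
        omega
      obtain ⟨hi, hii, hiii⟩ := bwd I hI d hd z h01 hOI' hC'
      exact ⟨z, ⟨h01, hdeg, hi, hii, hiii⟩, hsetO⟩
end

section
/- Let K be a field of characteristic zero and I = ⟨x_2^2 + x_1 x_2 + x_1^2, x_1 x_2^2, x_2^4⟩ ⊆ K[x_1, x_2]. Then the set O' = {1, x_1, x_2, x_1^2, x_2^2, x_2^3} is an order ideal supporting a border basis of I, yet there is no term ordering (monomial order) σ on the monomials in x_1, x_2 such that O' equals the set of monomials not lying in the leading-term ideal ⟨LT_σ(I)⟩ of I; that is, O' does not come from any term ordering. -/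
open MvPolynomial

/-- The ideal `I = ⟨x_2² + x_1x_2 + x_1², x_1x_2², x_2⁴⟩` of `K[x_1,x_2]`
(with `x_1 = X 0`, `x_2 = X 1`). -/
noncomputable def I18 (K : Type*) [Field K] : Ideal (MvPolynomial (Fin 2) K) :=
  Ideal.span {X 1 ^ 2 + X 0 * X 1 + X 0 ^ 2, X 0 * X 1 ^ 2, X 1 ^ 4}

/-- The order ideal `O' = {1, x_1, x_2, x_1², x_2², x_2³}` (as exponent
vectors). -/
def Oex : Set (Fin 2 →₀ ℕ) :=
  {0, Finsupp.single (0 : Fin 2) 1, Finsupp.single (1 : Fin 2) 1,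
   Finsupp.single (0 : Fin 2) 2, Finsupp.single (1 : Fin 2) 2,
   Finsupp.single (1 : Fin 2) 3}

/-- A term ordering: a linear order on monomials (given as a `≤`-like
relation `r`) compatible with multiplication and having `1` as least
element. -/
def IsTermOrder (r : (Fin 2 →₀ ℕ) → (Fin 2 →₀ ℕ) → Prop) : Prop :=
  IsLinearOrder (Fin 2 →₀ ℕ) r ∧ (∀ a b c, r a b → r (a + c) (b + c)) ∧ ∀ a, r 0 a

/-- The leading term ideal `⟨LT_σ(I)⟩`: the monomial ideal generated by the
`σ`-largest monomials of the supports of the nonzero elements of `I`. -/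
noncomputable def LTIdeal (K : Type*) [Field K]
    (r : (Fin 2 →₀ ℕ) → (Fin 2 →₀ ℕ) → Prop) (I : Ideal (MvPolynomial (Fin 2) K)) :
    Ideal (MvPolynomial (Fin 2) K) :=
  Ideal.span ((fun m => monomial m (1 : K)) ''
    {m : Fin 2 →₀ ℕ | ∃ p ∈ I, p ≠ 0 ∧ m ∈ p.support ∧ ∀ m' ∈ p.support, r m' m})

/-! ### Auxiliary definitions -/

/-- The exponent vector of `x_1^a x_2^b`. -/
noncomputable def e18 (a b : ℕ) : Fin 2 →₀ ℕ := Finsupp.single 0 a + Finsupp.single 1 b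

@[simp] lemma e18_apply0 (a b : ℕ) : e18 a b 0 = a := by
  simp [e18, Finsupp.single_apply]

@[simp] lemma e18_apply1 (a b : ℕ) : e18 a b 1 = b := by
  simp [e18, Finsupp.single_apply]

lemma e18_repr (m : Fin 2 →₀ ℕ) : m = e18 (m 0) (m 1) := by
  ext i
  fin_cases i <;> simp

lemma mono_e18 {K : Type*} [Field K] (a b : ℕ) :
    (monomial (e18 a b) (1 : K) : MvPolynomial (Fin 2) K) = X 0 ^ a * X 1 ^ b := by
  rw [e18, X_pow_eq_monomial, X_pow_eq_monomial, monomial_mul, mul_one]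

/-- Normal form of the monomial `x_1^a x_2^b` modulo `I18`. -/
noncomputable def nf18 (K : Type*) [Field K] (a b : ℕ) : MvPolynomial (Fin 2) K :=
  if a = 0 ∧ b = 0 then 1
  else if a = 1 ∧ b = 0 then X 0
  else if a = 0 ∧ b = 1 then X 1
  else if a = 2 ∧ b = 0 then X 0 ^ 2
  else if a = 0 ∧ b = 2 then X 1 ^ 2
  else if a = 0 ∧ b = 3 then X 1 ^ 3
  else if a = 1 ∧ b = 1 then -(X 0 ^ 2 + X 1 ^ 2)
  else if a = 3 ∧ b = 0 then X 1 ^ 3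
  else if a = 2 ∧ b = 1 then -(X 1 ^ 3)
  else 0

lemma nf18_big {K : Type*} [Field K] (a b : ℕ) (h : 4 ≤ a + b) :
    nf18 K a b = 0 := by
  unfold nf18
  rw [if_neg (by omega), if_neg (by omega), if_neg (by omega), if_neg (by omega),
    if_neg (by omega), if_neg (by omega), if_neg (by omega), if_neg (by omega),
    if_neg (by omega)]

lemma nf18_12 {K : Type*} [Field K] : nf18 K 1 2 = 0 := by norm_num [nf18]

/-- The normal-form projection, as a linear map. -/
noncomputable def N18 (K : Type*) [Field K] :
    MvPolynomial (Fin 2) K →ₗ[K] MvPolynomial (Fin 2) K :=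
  Finsupp.linearCombination K (fun m : Fin 2 →₀ ℕ => nf18 K (m 0) (m 1)) ∘ₗ
    (AddMonoidAlgebra.coeffLinearEquiv K).toLinearMap

lemma N18_monomial {K : Type*} [Field K] (m : Fin 2 →₀ ℕ) (c : K) :
    N18 K (monomial m c) = c • nf18 K (m 0) (m 1) := by
  rw [N18, ← single_eq_monomial, LinearMap.comp_apply, LinearEquiv.coe_coe,
    AddMonoidAlgebra.coeffLinearEquiv_apply, AddMonoidAlgebra.coeff_single]
  exact Finsupp.linearCombination_single K c m

/-! ### Membership lemmas for `I18` -/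

section Mem

variable {K : Type*} [Field K]

lemma g1_mem : (X 1 ^ 2 + X 0 * X 1 + X 0 ^ 2 : MvPolynomial (Fin 2) K) ∈ I18 K :=
  Ideal.subset_span (by simp)

lemma g2_mem : (X 0 * X 1 ^ 2 : MvPolynomial (Fin 2) K) ∈ I18 K :=
  Ideal.subset_span (by simp)

lemma g3_mem : (X 1 ^ 4 : MvPolynomial (Fin 2) K) ∈ I18 K :=
  Ideal.subset_span (by simp)

lemma h1_mem : (X 0 ^ 2 * X 1 + X 1 ^ 3 : MvPolynomial (Fin 2) K) ∈ I18 K := by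
  have h : (X 0 ^ 2 * X 1 + X 1 ^ 3 : MvPolynomial (Fin 2) K)
      = X 1 * (X 1 ^ 2 + X 0 * X 1 + X 0 ^ 2) - X 0 * X 1 ^ 2 := by ring
  rw [h]
  exact sub_mem (Ideal.mul_mem_left _ _ g1_mem) g2_mem

lemma h2_mem : (X 0 ^ 3 - X 1 ^ 3 : MvPolynomial (Fin 2) K) ∈ I18 K := by
  have h : (X 0 ^ 3 - X 1 ^ 3 : MvPolynomial (Fin 2) K)
      = X 0 * (X 1 ^ 2 + X 0 * X 1 + X 0 ^ 2) - X 0 * X 1 ^ 2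
        - (X 0 ^ 2 * X 1 + X 1 ^ 3) := by ring
  rw [h]
  exact sub_mem (sub_mem (Ideal.mul_mem_left _ _ g1_mem) g2_mem) h1_mem

lemma x04_mem : (X 0 ^ 4 : MvPolynomial (Fin 2) K) ∈ I18 K := by
  have h : (X 0 ^ 4 : MvPolynomial (Fin 2) K)
      = X 0 * (X 0 ^ 3 - X 1 ^ 3) + X 1 * (X 0 * X 1 ^ 2) := by ring
  rw [h]
  exact add_mem (Ideal.mul_mem_left _ _ h2_mem) (Ideal.mul_mem_left _ _ g2_mem)

lemma x03x1_mem : (X 0 ^ 3 * X 1 : MvPolynomial (Fin 2) K) ∈ I18 K := by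
  have h : (X 0 ^ 3 * X 1 : MvPolynomial (Fin 2) K)
      = X 1 * (X 0 ^ 3 - X 1 ^ 3) + X 1 ^ 4 := by ring
  rw [h]
  exact add_mem (Ideal.mul_mem_left _ _ h2_mem) g3_mem

lemma powI18_mem (a b : ℕ) (h : 4 ≤ a + b) :
    (X 0 ^ a * X 1 ^ b : MvPolynomial (Fin 2) K) ∈ I18 K := by
  rcases Nat.lt_or_ge b 4 with hb | hb
  · interval_cases b
    · obtain ⟨a', rfl⟩ : ∃ a', a = a' + 4 := ⟨a - 4, by omega⟩
      have h' : (X 0 ^ (a' + 4) * X 1 ^ 0 : MvPolynomial (Fin 2) K)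
          = X 0 ^ a' * X 0 ^ 4 := by ring
      rw [h']
      exact Ideal.mul_mem_left _ _ x04_mem
    · obtain ⟨a', rfl⟩ : ∃ a', a = a' + 3 := ⟨a - 3, by omega⟩
      have h' : (X 0 ^ (a' + 3) * X 1 ^ 1 : MvPolynomial (Fin 2) K)
          = X 0 ^ a' * (X 0 ^ 3 * X 1) := by ring
      rw [h']
      exact Ideal.mul_mem_left _ _ x03x1_mem
    · obtain ⟨a', rfl⟩ : ∃ a', a = a' + 2 := ⟨a - 2, by omega⟩
      have h' : (X 0 ^ (a' + 2) * X 1 ^ 2 : MvPolynomial (Fin 2) K)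
          = X 0 ^ (a' + 1) * (X 0 * X 1 ^ 2) := by ring
      rw [h']
      exact Ideal.mul_mem_left _ _ g2_mem
    · obtain ⟨a', rfl⟩ : ∃ a', a = a' + 1 := ⟨a - 1, by omega⟩
      have h' : (X 0 ^ (a' + 1) * X 1 ^ 3 : MvPolynomial (Fin 2) K)
          = (X 0 ^ a' * X 1) * (X 0 * X 1 ^ 2) := by ring
      rw [h']
      exact Ideal.mul_mem_left _ _ g2_mem
  · obtain ⟨b', rfl⟩ : ∃ b', b = b' + 4 := ⟨b - 4, by omega⟩
    have h' : (X 0 ^ a * X 1 ^ (b' + 4) : MvPolynomial (Fin 2) K)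
        = (X 0 ^ a * X 1 ^ b') * X 1 ^ 4 := by ring
    rw [h']
    exact Ideal.mul_mem_left _ _ g3_mem

lemma sub_nf_mem (a b : ℕ) :
    (X 0 ^ a * X 1 ^ b : MvPolynomial (Fin 2) K) - nf18 K a b ∈ I18 K := by
  by_cases h : 4 ≤ a + b
  · rw [nf18_big a b h, sub_zero]
    exact powI18_mem a b h
  · push_neg at h
    have ha : a ≤ 3 := by omega
    have hb : b ≤ 3 := by omega
    interval_cases a <;> interval_cases b <;> try omega
    · norm_num [nf18]
    · norm_num [nf18]
    · norm_num [nf18]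
    · norm_num [nf18]
    · norm_num [nf18]
    · have h1 : nf18 K 1 1 = -(X 0 ^ 2 + X 1 ^ 2) := by norm_num [nf18]
      rw [h1]
      have h2 : (X 0 ^ 1 * X 1 ^ 1 : MvPolynomial (Fin 2) K) - -(X 0 ^ 2 + X 1 ^ 2)
          = X 1 ^ 2 + X 0 * X 1 + X 0 ^ 2 := by ring
      rw [h2]; exact g1_mem
    · rw [nf18_12, sub_zero]
      have h2 : (X 0 ^ 1 * X 1 ^ 2 : MvPolynomial (Fin 2) K) = X 0 * X 1 ^ 2 := by ring
      rw [h2]; exact g2_mem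
    · norm_num [nf18]
    · have h1 : nf18 K 2 1 = -(X 1 ^ 3) := by norm_num [nf18]
      rw [h1]
      have h2 : (X 0 ^ 2 * X 1 ^ 1 : MvPolynomial (Fin 2) K) - -(X 1 ^ 3)
          = X 0 ^ 2 * X 1 + X 1 ^ 3 := by ring
      rw [h2]; exact h1_mem
    · have h1 : nf18 K 3 0 = X 1 ^ 3 := by norm_num [nf18]
      rw [h1]
      have h2 : (X 0 ^ 3 * X 1 ^ 0 : MvPolynomial (Fin 2) K) - X 1 ^ 3
          = X 0 ^ 3 - X 1 ^ 3 := by ring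
      rw [h2]; exact h2_mem

end Mem

/-! ### `N18` kills `I18` -/

section Kill

variable {K : Type*} [Field K]

lemma Ng1_aux (a b : ℕ) :
    nf18 K a (b + 2) + nf18 K (a + 1) (b + 1) + nf18 K (a + 2) b = 0 := by
  rcases a with _ | a
  · rcases b with _ | b
    · have h1 : nf18 K 0 2 = X 1 ^ 2 := by norm_num [nf18]
      have h2 : nf18 K 1 1 = -(X 0 ^ 2 + X 1 ^ 2) := by norm_num [nf18]
      have h3 : nf18 K 2 0 = X 0 ^ 2 := by norm_num [nf18]
      rw [h1, h2, h3]; ring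
    · rcases b with _ | b
      · have h1 : nf18 K 0 3 = X 1 ^ 3 := by norm_num [nf18]
        have h2 : nf18 K 2 1 = -(X 1 ^ 3) := by norm_num [nf18]
        rw [h1, nf18_12, h2]; ring
      · rw [nf18_big _ _ (by omega), nf18_big _ _ (by omega), nf18_big _ _ (by omega)]
        ring
  · rcases b with _ | b
    · rcases a with _ | a
      · have h1 : nf18 K 2 1 = -(X 1 ^ 3) := by norm_num [nf18]
        have h2 : nf18 K 3 0 = X 1 ^ 3 := by norm_num [nf18]
        rw [nf18_12, h1, h2]; ring
      · rw [nf18_big _ _ (by omega), nf18_big _ _ (by omega), nf18_big _ _ (by omega)]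
        ring
    · rw [nf18_big _ _ (by omega), nf18_big _ _ (by omega), nf18_big _ _ (by omega)]
      ring

lemma Ng2_aux (a b : ℕ) : nf18 K (a + 1) (b + 2) = 0 := by
  rcases a with _ | a
  · rcases b with _ | b
    · exact nf18_12
    · exact nf18_big _ _ (by omega)
  · exact nf18_big _ _ (by omega)

lemma N18_mul_g1 (m : Fin 2 →₀ ℕ) :
    N18 K (monomial m 1 * (X 1 ^ 2 + X 0 * X 1 + X 0 ^ 2)) = 0 := by
  obtain ⟨a, b, rfl⟩ : ∃ a b, m = e18 a b := ⟨m 0, m 1, e18_repr m⟩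
  have h : (monomial (e18 a b) (1 : K)) * (X 1 ^ 2 + X 0 * X 1 + X 0 ^ 2)
      = monomial (e18 a (b + 2)) 1 + monomial (e18 (a + 1) (b + 1)) 1
        + monomial (e18 (a + 2) b) 1 := by
    rw [mono_e18, mono_e18, mono_e18, mono_e18]; ring
  rw [h, map_add, map_add, N18_monomial, N18_monomial, N18_monomial]
  simp only [e18_apply0, e18_apply1, one_smul]
  exact Ng1_aux a b

lemma N18_mul_g2 (m : Fin 2 →₀ ℕ) :
    N18 K (monomial m 1 * (X 0 * X 1 ^ 2)) = 0 := by
  obtain ⟨a, b, rfl⟩ : ∃ a b, m = e18 a b := ⟨m 0, m 1, e18_repr m⟩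
  have h : (monomial (e18 a b) (1 : K)) * (X 0 * X 1 ^ 2)
      = monomial (e18 (a + 1) (b + 2)) 1 := by
    rw [mono_e18, mono_e18]; ring
  rw [h, N18_monomial]
  simp only [e18_apply0, e18_apply1, one_smul]
  exact Ng2_aux a b

lemma N18_mul_g3 (m : Fin 2 →₀ ℕ) :
    N18 K (monomial m 1 * (X 1 ^ 4)) = 0 := by
  obtain ⟨a, b, rfl⟩ : ∃ a b, m = e18 a b := ⟨m 0, m 1, e18_repr m⟩
  have h : (monomial (e18 a b) (1 : K)) * (X 1 ^ 4)
      = monomial (e18 a (b + 4)) 1 := by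
    rw [mono_e18, mono_e18]; ring
  rw [h, N18_monomial]
  simp only [e18_apply0, e18_apply1, one_smul]
  exact nf18_big _ _ (by omega)

lemma N18_mul_gen {g : MvPolynomial (Fin 2) K}
    (hg : ∀ m : Fin 2 →₀ ℕ, N18 K (monomial m 1 * g) = 0) (q : MvPolynomial (Fin 2) K) :
    N18 K (q * g) = 0 := by
  induction q using MvPolynomial.induction_on' with
  | monomial m c =>
    have h : (monomial m c) * g = c • (monomial m 1 * g) := by
      rw [← smul_mul_assoc, smul_monomial, smul_eq_mul, mul_one]
    rw [h, map_smul, hg m, smul_zero]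
  | add p q hp hq => rw [add_mul, map_add, hp, hq, add_zero]

lemma N18_vanish {p : MvPolynomial (Fin 2) K} (hp : p ∈ I18 K) : N18 K p = 0 := by
  have key : ∀ q, N18 K (q * p) = 0 := by
    refine Submodule.span_induction
      (p := fun x _ => ∀ q, N18 K (q * x) = 0) ?_ ?_ ?_ ?_ hp
    · intro x hx q
      simp only [Set.mem_insert_iff, Set.mem_singleton_iff] at hx
      rcases hx with rfl | rfl | rfl
      · exact N18_mul_gen N18_mul_g1 q
      · exact N18_mul_gen N18_mul_g2 q
      · exact N18_mul_gen N18_mul_g3 q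
    · intro q; rw [mul_zero, map_zero]
    · intro x y _ _ hx hy q
      rw [mul_add, map_add, hx, hy, add_zero]
    · intro a x _ hx q
      rw [smul_eq_mul, ← mul_assoc, hx]
  simpa using key 1

end Kill

/-! ### Span facts -/

section Span

variable {K : Type*} [Field K]

lemma mem_Oex {m : Fin 2 →₀ ℕ} : m ∈ Oex ↔
    (m 0 = 0 ∧ m 1 = 0) ∨ (m 0 = 1 ∧ m 1 = 0) ∨ (m 0 = 0 ∧ m 1 = 1) ∨
    (m 0 = 2 ∧ m 1 = 0) ∨ (m 0 = 0 ∧ m 1 = 2) ∨ (m 0 = 0 ∧ m 1 = 3) := by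
  constructor
  · intro h
    simp only [Oex, Set.mem_insert_iff, Set.mem_singleton_iff] at h
    rcases h with rfl | rfl | rfl | rfl | rfl | rfl <;>
      simp [Finsupp.single_apply]
  · intro h
    rw [e18_repr m]
    simp only [Oex, Set.mem_insert_iff, Set.mem_singleton_iff]
    rcases h with ⟨h0, h1⟩ | ⟨h0, h1⟩ | ⟨h0, h1⟩ | ⟨h0, h1⟩ | ⟨h0, h1⟩ | ⟨h0, h1⟩ <;>
      rw [h0, h1] <;> simp [e18]

lemma mono_mem_span {a b : ℕ} (h : e18 a b ∈ Oex) :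
    (X 0 ^ a * X 1 ^ b : MvPolynomial (Fin 2) K) ∈ monSpan K Oex := by
  rw [← mono_e18]
  exact Submodule.subset_span ⟨e18 a b, h, rfl⟩

lemma e18_mem_Oex_iff (a b : ℕ) : e18 a b ∈ Oex ↔
    (a = 0 ∧ b = 0) ∨ (a = 1 ∧ b = 0) ∨ (a = 0 ∧ b = 1) ∨
    (a = 2 ∧ b = 0) ∨ (a = 0 ∧ b = 2) ∨ (a = 0 ∧ b = 3) := by
  rw [mem_Oex]; simp

lemma nf18_mem_span (a b : ℕ) : nf18 K a b ∈ monSpan K Oex := by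
  have h1 : (1 : MvPolynomial (Fin 2) K) ∈ monSpan K Oex := by
    simpa using mono_mem_span (K := K) (a := 0) (b := 0)
      ((e18_mem_Oex_iff 0 0).mpr (by tauto))
  have hx0 : (X 0 : MvPolynomial (Fin 2) K) ∈ monSpan K Oex := by
    simpa using mono_mem_span (K := K) (a := 1) (b := 0)
      ((e18_mem_Oex_iff 1 0).mpr (by tauto))
  have hx1 : (X 1 : MvPolynomial (Fin 2) K) ∈ monSpan K Oex := by
    simpa using mono_mem_span (K := K) (a := 0) (b := 1)
      ((e18_mem_Oex_iff 0 1).mpr (by tauto))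
  have hx02 : (X 0 ^ 2 : MvPolynomial (Fin 2) K) ∈ monSpan K Oex := by
    simpa using mono_mem_span (K := K) (a := 2) (b := 0)
      ((e18_mem_Oex_iff 2 0).mpr (by tauto))
  have hx12 : (X 1 ^ 2 : MvPolynomial (Fin 2) K) ∈ monSpan K Oex := by
    simpa using mono_mem_span (K := K) (a := 0) (b := 2)
      ((e18_mem_Oex_iff 0 2).mpr (by tauto))
  have hx13 : (X 1 ^ 3 : MvPolynomial (Fin 2) K) ∈ monSpan K Oex := by
    simpa using mono_mem_span (K := K) (a := 0) (b := 3)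
      ((e18_mem_Oex_iff 0 3).mpr (by tauto))
  unfold nf18
  split_ifs
  · exact h1
  · exact hx0
  · exact hx1
  · exact hx02
  · exact hx12
  · exact hx13
  · exact neg_mem (add_mem hx02 hx12)
  · exact hx13
  · exact neg_mem hx13
  · exact zero_mem _

lemma N18_mem_span (p : MvPolynomial (Fin 2) K) : N18 K p ∈ monSpan K Oex := by
  induction p using MvPolynomial.induction_on' with
  | monomial m c =>
    rw [N18_monomial]
    exact Submodule.smul_mem _ _ (nf18_mem_span _ _)
  | add p q hp hq => rw [map_add]; exact add_mem hp hq

lemma N18_fix {q : MvPolynomial (Fin 2) K} (hq : q ∈ monSpan K Oex) : N18 K q = q := by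
  refine Submodule.span_induction (p := fun x _ => N18 K x = x) ?_ ?_ ?_ ?_ hq
  · rintro x ⟨m, hm, rfl⟩
    rw [mem_Oex] at hm
    have hrepr := e18_repr m
    rcases hm with ⟨h0, h1⟩ | ⟨h0, h1⟩ | ⟨h0, h1⟩ | ⟨h0, h1⟩ | ⟨h0, h1⟩ | ⟨h0, h1⟩ <;>
      rw [h0, h1] at hrepr <;> rw [hrepr, N18_monomial] <;>
      simp only [e18_apply0, e18_apply1, one_smul, mono_e18] <;>
      norm_num [nf18]
  · exact map_zero _
  · intro x y _ _ hx hy; rw [map_add, hx, hy]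
  · intro a x _ hx; rw [map_smul, hx]

lemma sub_N18_mem (p : MvPolynomial (Fin 2) K) : p - N18 K p ∈ I18 K := by
  induction p using MvPolynomial.induction_on' with
  | monomial m c =>
    rw [N18_monomial]
    have h : (monomial m c : MvPolynomial (Fin 2) K) - c • nf18 K (m 0) (m 1)
        = C c * (monomial m 1 - nf18 K (m 0) (m 1)) := by
      rw [mul_sub, C_mul_monomial, mul_one, smul_eq_C_mul]
    rw [h]
    refine Ideal.mul_mem_left _ _ ?_
    have hrepr := e18_repr m
    rw [hrepr, mono_e18]
    simpa using sub_nf_mem (K := K) (m 0) (m 1)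
  | add p q hp hq =>
    have h : p + q - N18 K (p + q) = (p - N18 K p) + (q - N18 K q) := by
      rw [map_add]; ring
    rw [h]
    exact add_mem hp hq

end Span

/-! ### Term order facts -/

lemma termOrder_cancel {r : (Fin 2 →₀ ℕ) → (Fin 2 →₀ ℕ) → Prop} (h : IsTermOrder r)
    {a b c : Fin 2 →₀ ℕ} (H : r (a + c) (b + c)) : r a b := by
  obtain ⟨hlin, hadd, _⟩ := h
  rcases hlin.toTotal.total a b with hab | hba
  · exact hab
  · have h2 : r (b + c) (a + c) := hadd b a c hba
    have h3 : a + c = b + c := hlin.toIsPartialOrder.toAntisymm.antisymm _ _ H h2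
    have h4 : a = b := by
      ext i
      have := DFunLike.congr_fun h3 i
      simp only [Finsupp.add_apply] at this
      omega
    rw [h4]
    exact hlin.toIsPartialOrder.toIsPreorder.refl b

/-! ### Main theorem -/

/-- `O' = {1, x_1, x_2, x_1², x_2², x_2³}` is an order ideal
supporting a border basis of `I = ⟨x_2²+x_1x_2+x_1², x_1x_2², x_2⁴⟩`, yet
there is no term ordering `σ` with `O'` equal to the set of monomials outside
the leading term ideal `⟨LT_σ(I)⟩`. -/
theorem orderIdeal_not_from_termOrder {K : Type*} [Field K] [CharZero K] :
    IsOrderIdeal Oex ∧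
    IsCompl (Submodule.restrictScalars K (I18 K)) (monSpan K Oex) ∧
    ¬ ∃ r : (Fin 2 →₀ ℕ) → (Fin 2 →₀ ℕ) → Prop, IsTermOrder r ∧
        Oex = {m : Fin 2 →₀ ℕ | monomial m (1 : K) ∉ LTIdeal K r (I18 K)} := by
  refine ⟨⟨?_, ?_⟩, ⟨?_, ?_⟩, ?_⟩
  · -- finiteness
    exact Set.Finite.insert _ (Set.Finite.insert _ (Set.Finite.insert _
      (Set.Finite.insert _ (Set.Finite.insert _ (Set.finite_singleton _)))))
  · -- closed under divisibility
    intro t ht t' hle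
    rw [mem_Oex] at ht ⊢
    have h0 := (Finsupp.le_def.mp hle) 0
    have h1 := (Finsupp.le_def.mp hle) 1
    omega
  · -- disjointness
    rw [Submodule.disjoint_def]
    intro p hpI hpS
    rw [Submodule.restrictScalars_mem] at hpI
    have h1 : N18 K p = 0 := N18_vanish hpI
    have h2 : N18 K p = p := N18_fix hpS
    rw [← h2, h1]
  · -- codisjointness
    rw [codisjoint_iff, eq_top_iff]
    intro p _
    rw [Submodule.mem_sup]
    exact ⟨p - N18 K p, by rw [Submodule.restrictScalars_mem]; exact sub_N18_mem p,
      N18 K p, N18_mem_span p, by ring⟩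
  · -- no term order
    rintro ⟨r, hto, hOex⟩
    set g1 : MvPolynomial (Fin 2) K := X 1 ^ 2 + X 0 * X 1 + X 0 ^ 2 with hg1
    have hg1mem : g1 ∈ I18 K := g1_mem
    have hrepr : g1 = monomial (e18 0 2) 1 + monomial (e18 1 1) 1 + monomial (e18 2 0) 1 := by
      rw [hg1, mono_e18, mono_e18, mono_e18]; ring
    have hne1 : e18 0 2 ≠ e18 1 1 := by
      intro h; have := DFunLike.congr_fun h 0; simp at this
    have hne2 : e18 0 2 ≠ e18 2 0 := by
      intro h; have := DFunLike.congr_fun h 0; simp at this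
    have hne3 : e18 1 1 ≠ e18 2 0 := by
      intro h; have := DFunLike.congr_fun h 0; simp at this
    have hcoeff : ∀ m : Fin 2 →₀ ℕ, coeff m g1 =
        (if e18 0 2 = m then (1 : K) else 0) + (if e18 1 1 = m then 1 else 0)
          + (if e18 2 0 = m then 1 else 0) := by
      intro m
      rw [hrepr, coeff_add, coeff_add, coeff_monomial, coeff_monomial, coeff_monomial]
    have hsupp : ∀ m : Fin 2 →₀ ℕ,
        m ∈ g1.support ↔ m = e18 0 2 ∨ m = e18 1 1 ∨ m = e18 2 0 := by
      intro m
      rw [mem_support_iff, hcoeff m]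
      constructor
      · intro h
        by_contra hc
        push_neg at hc
        obtain ⟨hc1, hc2, hc3⟩ := hc
        rw [if_neg (fun h' => hc1 h'.symm), if_neg (fun h' => hc2 h'.symm),
          if_neg (fun h' => hc3 h'.symm)] at h
        simp at h
      · rintro (rfl | rfl | rfl)
        · rw [if_pos rfl, if_neg hne1.symm, if_neg hne2.symm]; norm_num
        · rw [if_neg hne1, if_pos rfl, if_neg hne3.symm]; norm_num
        · rw [if_neg hne2, if_neg hne3, if_pos rfl]; norm_num
    have hg1ne : g1 ≠ 0 := by
      intro h
      have := (hsupp (e18 1 1)).mpr (Or.inr (Or.inl rfl))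
      rw [h] at this
      simp at this
    obtain ⟨hlin, hadd, hmin⟩ := hto
    have hrefl := hlin.toIsPartialOrder.toIsPreorder.refl
    -- the maximal element of the support gives a contradiction
    have key : ∀ m : Fin 2 →₀ ℕ, m ∈ g1.support → (∀ m' ∈ g1.support, r m' m) →
        m ∈ Oex → False := by
      intro m hm hmax hmOex
      have hLT : monomial m (1 : K) ∈ LTIdeal K r (I18 K) :=
        Ideal.subset_span ⟨m, ⟨g1, hg1mem, hg1ne, hm, hmax⟩, rfl⟩
      have := hOex ▸ hmOex
      exact this hLT
    have h02Oex : e18 0 2 ∈ Oex := (e18_mem_Oex_iff 0 2).mpr (by tauto)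
    have h20Oex : e18 2 0 ∈ Oex := (e18_mem_Oex_iff 2 0).mpr (by tauto)
    have hm02 : e18 0 2 ∈ g1.support := (hsupp _).mpr (Or.inl rfl)
    have hm11 : e18 1 1 ∈ g1.support := (hsupp _).mpr (Or.inr (Or.inl rfl))
    have hm20 : e18 2 0 ∈ g1.support := (hsupp _).mpr (Or.inr (Or.inr rfl))
    -- e18 1 1 cannot be maximal
    have hs01 : Finsupp.single (0 : Fin 2) 1 ≠ Finsupp.single (1 : Fin 2) 1 := by
      intro h; have := DFunLike.congr_fun h 0; simp at this
    have h11notmax : ¬ (r (e18 0 2) (e18 1 1) ∧ r (e18 2 0) (e18 1 1)) := by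
      rintro ⟨h1, h2⟩
      have key1 : r (Finsupp.single (1 : Fin 2) 1) (Finsupp.single (0 : Fin 2) 1) := by
        refine termOrder_cancel ⟨hlin, hadd, hmin⟩ (c := Finsupp.single 1 1) ?_
        have e1 : e18 0 2 = Finsupp.single (1 : Fin 2) 1 + Finsupp.single 1 1 := by
          rw [e18]; simp [← Finsupp.single_add]
        have e2 : e18 1 1 = Finsupp.single (0 : Fin 2) 1 + Finsupp.single 1 1 := by
          rw [e18]
        rw [← e1, ← e2]; exact h1
      have key2 : r (Finsupp.single (0 : Fin 2) 1) (Finsupp.single (1 : Fin 2) 1) := by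
        refine termOrder_cancel ⟨hlin, hadd, hmin⟩ (c := Finsupp.single 0 1) ?_
        have e1 : e18 2 0 = Finsupp.single (0 : Fin 2) 1 + Finsupp.single 0 1 := by
          rw [e18]; simp [← Finsupp.single_add]
        have e2 : e18 1 1 = Finsupp.single (1 : Fin 2) 1 + Finsupp.single 0 1 := by
          rw [e18, add_comm]
        rw [← e1, ← e2]; exact h2
      exact hs01 (hlin.toIsPartialOrder.toAntisymm.antisymm _ _ key2 key1)
    -- case analysis on which of the three support elements is maximal
    rcases hlin.toTotal.total (e18 0 2) (e18 2 0) with hA | hA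
    · rcases hlin.toTotal.total (e18 1 1) (e18 2 0) with hB | hB
      · -- e18 2 0 is maximal
        refine key (e18 2 0) hm20 ?_ h20Oex
        intro m' hm'
        rcases (hsupp m').mp hm' with rfl | rfl | rfl
        · exact hA
        · exact hB
        · exact hrefl _
      · rcases hlin.toTotal.total (e18 0 2) (e18 1 1) with hC | hC
        · -- e18 1 1 is maximal
          exact absurd ⟨hC, hB⟩ h11notmax
        · -- e18 0 2 maximal? we have r (e18 2 0) (e18 0 2)? no: hA : r (e18 0 2) (e18 2 0)
          -- but also r (e18 2 0) (e18 1 1) and r (e18 1 1) (e18 0 2); by transitivity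
          -- r (e18 2 0) (e18 0 2), so e18 0 2 is maximal
          have htrans := hlin.toIsPartialOrder.toIsPreorder.trans
          refine key (e18 0 2) hm02 ?_ h02Oex
          intro m' hm'
          rcases (hsupp m').mp hm' with rfl | rfl | rfl
          · exact hrefl _
          · exact hC
          · exact htrans _ _ _ hB hC
    · rcases hlin.toTotal.total (e18 1 1) (e18 0 2) with hB | hB
      · -- e18 0 2 is maximal
        refine key (e18 0 2) hm02 ?_ h02Oex
        intro m' hm'
        rcases (hsupp m').mp hm' with rfl | rfl | rfl
        · exact hrefl _
        · exact hB
        · exact hA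
      · rcases hlin.toTotal.total (e18 2 0) (e18 1 1) with hC | hC
        · -- e18 1 1 is maximal
          exact absurd ⟨hB, hC⟩ h11notmax
        · -- e18 2 0 is maximal
          have htrans := hlin.toIsPartialOrder.toIsPreorder.trans
          refine key (e18 2 0) hm20 ?_ h20Oex
          intro m' hm'
          rcases (hsupp m').mp hm' with rfl | rfl | rfl
          · exact htrans _ _ _ hB hC
          · exact hC
          · exact hrefl _
end
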